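/- LLPO × LLPO is not continuously Weihrauch reducible to LPO, i.e., LLPO × LLPO ≤*_W LPO fails. -/

import Mathlib

/-- Baire space. -/
abbrev Baire := ℕ → ℕ

/-- A problem: a partial multivalued function on Baire space, given as the
solution-set map; the domain is the set of instances with nonempty solution set. -/
def Problem := Baire → Set Baire

/-- Domain of a problem. -/
def Dom (f : Problem) : Set Baire := {x | (f x).Nonempty}

/-- A standard computable pairing of two sequences (interleaving). -/
def pair (x y : Baire) : Baire := fun n => if n % 2 = 0 then x (n / 2) else y (n / 2)

/-- Initial segment of length `m` of a sequence. -/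
def initSeg (x : Baire) (m : ℕ) : List ℕ := (List.range m).map x

/-- `F` is (the restriction to `D` of) a partial computable function on Baire space:
there is a computable monotone oracle functional computing `F x` from prefixes of `x`,
correctly and consistently, for every `x ∈ D`. -/
def ComputableOn (F : Baire → Baire) (D : Set Baire) : Prop :=
  ∃ φ : List ℕ → ℕ → Option ℕ, Computable₂ φ ∧
    ∀ x ∈ D, ∀ n : ℕ,
      (∃ m, φ (initSeg x m) n = some (F x n)) ∧
      (∀ m v, φ (initSeg x m) n = some v → v = F x n)

/-- Weihrauch reducibility `f ≤_W g`, with the partial computable forward functional `k`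
defined on `Dom f` and the partial computable backward functional `h` defined on all
pairs `⟨x, y⟩` with `x ∈ Dom f` and `y` a `g`-solution of `k x`. -/
def WRed (f g : Problem) : Prop :=
  ∃ h k : Baire → Baire,
    ComputableOn k (Dom f) ∧
    ComputableOn h {p | ∃ x ∈ Dom f, ∃ y ∈ g (k x), p = pair x y} ∧
    ∀ x ∈ Dom f, k x ∈ Dom g ∧ ∀ y ∈ g (k x), h (pair x y) ∈ f x

/-- Weihrauch equivalence. -/
def WEquiv (f g : Problem) : Prop := WRed f g ∧ WRed g f

/-- Continuous Weihrauch reducibility `f ≤*_W g`: as `WRed` but the functionals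
need only be partial continuous (continuous on their domains, Baire space carrying
the product topology). -/
def ContWRed (f g : Problem) : Prop :=
  ∃ h k : Baire → Baire,
    ContinuousOn k (Dom f) ∧
    ContinuousOn h {p | ∃ x ∈ Dom f, ∃ y ∈ g (k x), p = pair x y} ∧
    ∀ x ∈ Dom f, k x ∈ Dom g ∧ ∀ y ∈ g (k x), h (pair x y) ∈ f x

/-- Continuous Weihrauch equivalence. -/
def ContWEquiv (f g : Problem) : Prop := ContWRed f g ∧ ContWRed g f

/-- Composition of problems: `dom (f ∘ g) = {x ∈ dom g : g x ⊆ dom f}` and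
`(f ∘ g) x = {z : ∃ y ∈ g x, z ∈ f y}`. -/
def pcomp (f g : Problem) : Problem :=
  fun x => {z | g x ⊆ Dom f ∧ ∃ y ∈ g x, z ∈ f y}

/-- The identity problem. -/
def idp : Problem := fun x => {x}

/-- `p` is (a representative of) the compositional product `f * g`: the maximum,
with respect to `≤_W`, of `{f' ∘ g' : f' ≤_W f, g' ≤_W g}`. -/
def IsCompProd (f g p : Problem) : Prop :=
  (∃ f' g', WRed f' f ∧ WRed g' g ∧ WEquiv p (pcomp f' g')) ∧
  (∀ f' g', WRed f' f → WRed g' g → WRed (pcomp f' g') p)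

/-- `IsIter f n p` : `p` is (a representative of) `f^[n]`, the compositional product of
`n` copies of `f`, with `f^[0] := id`. -/
def IsIter (f : Problem) : ℕ → Problem → Prop
  | 0, p => p = idp
  | n + 1, p => ∃ q, IsIter f n q ∧ IsCompProd f q p

/-- The constant sequence with value `n`. -/
def cseq (n : ℕ) : Baire := fun _ => n

/-- The limited principle of omniscience. -/
def LPO : Problem := fun x =>
  {y | ((∃ n, x n = 0) ∧ y = cseq 0) ∨ ((∀ n, x n ≠ 0) ∧ y = cseq 1)}

/-- The lesser limited principle of omniscience. -/
def LLPO : Problem := fun x =>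
  {y | (∀ i j, x i ≠ 0 → x j ≠ 0 → i = j) ∧
       ((y = cseq 0 ∧ ∀ i, Even i → x i = 0) ∨
        (y = cseq 1 ∧ ∀ i, Odd i → x i = 0))}

/-- Turing reducibility between points of Baire space: `x` is computable from
oracle `y`. -/
def TuringLE (x y : Baire) : Prop :=
  ∃ φ : List ℕ → ℕ → Option ℕ, Computable₂ φ ∧
    ∀ n : ℕ, (∃ m, φ (initSeg y m) n = some (x n)) ∧
      (∀ m v, φ (initSeg y m) n = some v → v = x n)

/-- Mutual Turing reducibility: `x` and `y` have the same Turing degree. -/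
def TuringEquiv (x y : Baire) : Prop := TuringLE x y ∧ TuringLE y x

/-- Strict Turing reducibility. -/
def TuringLT (x y : Baire) : Prop := TuringLE x y ∧ ¬ TuringLE y x

/-- The problem `w_a`, for `a` a representative of a (non-zero) Turing degree. -/
def w (a : Baire) : Problem := fun x =>
  {y | (Computable x ∧ ¬ Computable y) ∨ (¬ Computable x ∧ TuringEquiv y a)}

/-- `k`-weak continuity of a problem. -/
def WeaklyContinuous (k : ℕ) (f : Problem) : Prop :=
  ∀ x ∈ Dom f, ∀ y : ℕ → Baire, (∀ n, y n ∈ Dom f) →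
    Filter.Tendsto y Filter.atTop (nhds x) →
    ∃ u ∈ f x, ∀ l < k, ∀ m : ℕ, ∃ n ≥ m,
      ∃ v ∈ f (y (n * k + l)), initSeg u m = initSeg v m

/-- Product of two problems. -/
def prodP (f g : Problem) : Problem := fun z =>
  {w | ∃ x y u v, z = pair x y ∧ w = pair u v ∧ u ∈ f x ∧ v ∈ g y}

/-- `powP f n` : the product of `n` copies of `f` (for `n ≥ 1`). -/
def powP (f : Problem) : ℕ → Problem
  | 0 => idp
  | 1 => f
  | n + 2 => prodP f (powP f (n + 1))

/-- A problem `f` is `k`-continuous: it has a realizer `r` (defined on a domain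
`D ⊇ Dom f`) together with a partition of `D` into at most `k` pieces (given by a
coloring `c`) such that `r` is continuous on each piece. -/
def kContinuous (k : ℕ) (f : Problem) : Prop :=
  ∃ (D : Set Baire) (r : Baire → Baire) (c : Baire → Fin k),
    Dom f ⊆ D ∧ (∀ x ∈ Dom f, r x ∈ f x) ∧
    ∀ i : Fin k, ContinuousOn r {x ∈ D | c x = i}

section Aux

/-- Single nonzero entry at position `N`. -/
def delta (N : ℕ) : Baire := fun n => if n = N then 1 else 0

lemma delta_self (N : ℕ) : delta N N = 1 := if_pos rfl

lemma delta_ne {N j : ℕ} (h : j ≠ N) : delta N j = 0 := if_neg h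

lemma delta_amo (N : ℕ) : ∀ i j, delta N i ≠ 0 → delta N j ≠ 0 → i = j := by
  intro i j hi hj
  have hi' : i = N := by by_contra hne; exact hi (delta_ne hne)
  have hj' : j = N := by by_contra hne; exact hj (delta_ne hne)
  omega

lemma pair_fst (x y : Baire) (n : ℕ) : pair x y (2*n) = x n := by
  unfold pair
  rw [if_pos (by omega)]
  congr 1
  omega

lemma pair_snd (x y : Baire) (n : ℕ) : pair x y (2*n+1) = y n := by
  unfold pair
  rw [if_neg (by omega)]
  congr 1
  omega

lemma pair_zero (x y : Baire) : pair x y 0 = x 0 := pair_fst x y 0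

lemma pair_one (x y : Baire) : pair x y 1 = y 0 := pair_snd x y 0

lemma pair_inj {x y a b : Baire} (h : pair x y = pair a b) : x = a ∧ y = b := by
  constructor <;> funext n
  · have := congrFun h (2*n); rwa [pair_fst, pair_fst] at this
  · have := congrFun h (2*n+1); rwa [pair_snd, pair_snd] at this

lemma pair_apply_congr {x x' y y' : Baire} (i : ℕ)
    (hx : x (i/2) = x' (i/2)) (hy : y (i/2) = y' (i/2)) :
    pair x y i = pair x' y' i := by
  unfold pair; split_ifs <;> assumption

lemma cseq_apply (t n : ℕ) : cseq t n = t := rfl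

lemma cseq_zero_amo : ∀ i j : ℕ, cseq 0 i ≠ 0 → cseq 0 j ≠ 0 → i = j := by
  intro i j hi _; exact absurd rfl hi

lemma mem_llpo_zero (t : ℕ) (ht : t = 0 ∨ t = 1) : cseq t ∈ LLPO (cseq 0) := by
  refine ⟨cseq_zero_amo, ?_⟩
  rcases ht with h | h <;> subst h
  · exact Or.inl ⟨rfl, fun i _ => rfl⟩
  · exact Or.inr ⟨rfl, fun i _ => rfl⟩

lemma llpo_zero_forced {u : Baire} (hu : u ∈ LLPO (cseq 0)) :
    ∃ t, (t = 0 ∨ t = 1) ∧ u = cseq t := by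
  rcases hu.2 with ⟨h, _⟩ | ⟨h, _⟩
  · exact ⟨0, Or.inl rfl, h⟩
  · exact ⟨1, Or.inr rfl, h⟩

lemma llpo_delta_mem {N t : ℕ} (ht : t = 0 ∨ t = 1) (hN : N % 2 = t) :
    cseq (1 - t) ∈ LLPO (delta N) := by
  refine ⟨delta_amo N, ?_⟩
  rcases ht with h | h <;> subst h
  · refine Or.inr ⟨rfl, fun i hi => delta_ne (fun he => ?_)⟩
    rw [Nat.odd_iff] at hi; omega
  · refine Or.inl ⟨rfl, fun i hi => delta_ne (fun he => ?_)⟩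
    rw [Nat.even_iff] at hi; omega

lemma llpo_delta_forced {N t : ℕ} (ht : t = 0 ∨ t = 1) (hN : N % 2 = t)
    {u : Baire} (hu : u ∈ LLPO (delta N)) : u = cseq (1 - t) := by
  rcases hu.2 with ⟨h, hz⟩ | ⟨h, hz⟩
  · rcases ht with h' | h' <;> subst h'
    · exfalso
      have := hz N (Nat.even_iff.mpr hN)
      rw [delta_self] at this; omega
    · exact h
  · rcases ht with h' | h' <;> subst h'
    · exact h
    · exfalso
      have := hz N (Nat.odd_iff.mpr hN)
      rw [delta_self] at this; omega

lemma lpo_mem_zero {z : Baire} {p : ℕ} (h : z p = 0) : cseq 0 ∈ LPO z :=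
  Or.inl ⟨⟨p, h⟩, rfl⟩

lemma lpo_mem_one {z : Baire} (h : ∀ n, z n ≠ 0) : cseq 1 ∈ LPO z :=
  Or.inr ⟨h, rfl⟩

lemma mem_dom_pp {a b u v : Baire} (hu : u ∈ LLPO a) (hv : v ∈ LLPO b) :
    pair a b ∈ Dom (prodP LLPO LLPO) :=
  ⟨pair u v, a, b, u, v, rfl, rfl, hu, hv⟩

lemma pp_elim {a b w : Baire} (hw : w ∈ prodP LLPO LLPO (pair a b)) :
    ∃ u v, w = pair u v ∧ u ∈ LLPO a ∧ v ∈ LLPO b := by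
  obtain ⟨x, y, u, v, hxy, hw, hu, hv⟩ := hw
  obtain ⟨hx, hy⟩ := pair_inj hxy
  subst hx; subst hy
  exact ⟨u, v, hw, hu, hv⟩

lemma cyl {S : Set Baire} {h : Baire → Baire} {p : Baire}
    (hc : ContinuousWithinAt h S p) (N : ℕ) :
    ∃ m, ∀ q ∈ S, (∀ i < m, q i = p i) → h q N = h p N := by
  have hU : IsOpen {y : Baire | y N = h p N} := by
    have := (continuous_apply (A := fun _ : ℕ => ℕ) N).isOpen_preimage
      ({h p N} : Set ℕ) (isOpen_discrete _)
    exact this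
  have hmem : {y : Baire | y N = h p N} ∈ nhds (h p) := hU.mem_nhds rfl
  have h2 := hc hmem
  rw [Filter.mem_map, mem_nhdsWithin] at h2
  obtain ⟨V, hV, hpV, hVS⟩ := h2
  obtain ⟨I, u, hu, hsub⟩ := isOpen_pi_iff.mp hV p hpV
  refine ⟨(I.sup id) + 1, fun q hq hagree => ?_⟩
  have hqV : q ∈ V := hsub fun i hi => by
    rw [hagree i (Nat.lt_succ_of_le (Finset.le_sup (f := id) hi))]
    exact (hu i hi).2
  exact hVS ⟨hqV, hq⟩

lemma keyL (h k : Baire → Baire)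
    (hk : ContinuousOn k (Dom (prodP LLPO LLPO)))
    (hh : ContinuousOn h {p | ∃ x ∈ Dom (prodP LLPO LLPO), ∃ y ∈ LPO (k x), p = pair x y})
    (hcorr : ∀ x ∈ Dom (prodP LLPO LLPO), k x ∈ Dom LPO ∧
      ∀ y ∈ LPO (k x), h (pair x y) ∈ prodP LLPO LLPO x)
    (a : Baire) (ua : Baire) (hua : ua ∈ LLPO a)
    (p : ℕ) (hp : k (pair a (cseq 0)) p = 0) : False := by
  set S := Dom (prodP LLPO LLPO) with hS
  set Dh := {q | ∃ x ∈ S, ∃ y ∈ LPO (k x), q = pair x y} with hDh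
  set xs := pair a (cseq 0) with hxs
  have hxsS : xs ∈ S := mem_dom_pp hua (mem_llpo_zero 0 (Or.inl rfl))
  have hy0 : cseq 0 ∈ LPO (k xs) := lpo_mem_zero hp
  have hq0 : pair xs (cseq 0) ∈ Dh := ⟨xs, hxsS, cseq 0, hy0, rfl⟩
  obtain ⟨m, hm⟩ := cyl (hh _ hq0) 1
  obtain ⟨m', hm'⟩ := cyl (hk _ hxsS) p
  have hcq0 : h (pair xs (cseq 0)) ∈ prodP LLPO LLPO xs := (hcorr xs hxsS).2 _ hy0
  obtain ⟨u, v, hw, hu, hv⟩ := pp_elim hcq0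
  obtain ⟨δ, hδ, hvδ⟩ := llpo_zero_forced hv
  set N := 2*(m+m'+1) + δ with hNdef
  have hN : N % 2 = δ := by rcases hδ with h' | h' <;> omega
  set x2 := pair a (delta N) with hx2
  have hx2S : x2 ∈ S := mem_dom_pp hua (llpo_delta_mem hδ hN)
  have hagree' : ∀ i < m', x2 i = xs i := by
    intro i hi
    refine pair_apply_congr i rfl (delta_ne ?_)
    rcases hδ with h' | h' <;> omega
  have hk2 : k x2 p = 0 := by rw [hm' x2 hx2S hagree']; exact hp
  have hy2 : cseq 0 ∈ LPO (k x2) := lpo_mem_zero hk2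
  have hq2 : pair x2 (cseq 0) ∈ Dh := ⟨x2, hx2S, cseq 0, hy2, rfl⟩
  have hagree : ∀ i < m, pair x2 (cseq 0) i = pair xs (cseq 0) i := by
    intro i hi
    refine pair_apply_congr i ?_ rfl
    refine pair_apply_congr (i/2) rfl (delta_ne ?_)
    rcases hδ with h' | h' <;> omega
  have heq : h (pair x2 (cseq 0)) 1 = h (pair xs (cseq 0)) 1 := hm _ hq2 hagree
  have hcq2 : h (pair x2 (cseq 0)) ∈ prodP LLPO LLPO x2 := (hcorr x2 hx2S).2 _ hy2
  obtain ⟨u2, v2, hw2, hu2, hv2⟩ := pp_elim hcq2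
  have hv2' : v2 = cseq (1 - δ) := llpo_delta_forced hδ hN hv2
  rw [hw, hw2, pair_one, pair_one, hvδ, hv2'] at heq
  rcases hδ with h' | h' <;> simp [cseq_apply, h'] at heq

end Aux

/-- `LLPO × LLPO` is not continuously Weihrauch reducible to `LPO`. -/
theorem llpo_times_llpo_not_red_lpo : ¬ ContWRed (prodP LLPO LLPO) LPO := by
  rintro ⟨h, k, hk, hh, hcorr⟩
  set S := Dom (prodP LLPO LLPO) with hS
  set Dh := {q | ∃ x ∈ S, ∃ y ∈ LPO (k x), q = pair x y} with hDh
  have hc0 : cseq 0 ∈ LLPO (cseq 0) := mem_llpo_zero 0 (Or.inl rfl)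
  set x0 := pair (cseq 0) (cseq 0) with hx0
  have hx0S : x0 ∈ S := mem_dom_pp hc0 hc0
  by_cases hz : ∃ p, k x0 p = 0
  · obtain ⟨p, hp⟩ := hz
    exact keyL h k hk hh hcorr (cseq 0) (cseq 0) hc0 p hp
  · push_neg at hz
    have hy1 : cseq 1 ∈ LPO (k x0) := lpo_mem_one hz
    have hq0 : pair x0 (cseq 1) ∈ Dh := ⟨x0, hx0S, cseq 1, hy1, rfl⟩
    obtain ⟨m, hm⟩ := cyl (hh _ hq0) 0
    have hcq0 : h (pair x0 (cseq 1)) ∈ prodP LLPO LLPO x0 := (hcorr x0 hx0S).2 _ hy1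
    obtain ⟨u, v, hw, hu, hv⟩ := pp_elim hcq0
    obtain ⟨ε, hε, huε⟩ := llpo_zero_forced hu
    set N := 2*(m+1) + ε with hNdef
    have hN : N % 2 = ε := by rcases hε with h' | h' <;> omega
    set x1 := pair (delta N) (cseq 0) with hx1
    have hx1S : x1 ∈ S := mem_dom_pp (llpo_delta_mem hε hN) hc0
    by_cases hz1 : ∃ p, k x1 p = 0
    · obtain ⟨p, hp⟩ := hz1
      exact keyL h k hk hh hcorr (delta N) (cseq (1-ε)) (llpo_delta_mem hε hN) p hp
    · push_neg at hz1
      have hy1' : cseq 1 ∈ LPO (k x1) := lpo_mem_one hz1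
      have hq1 : pair x1 (cseq 1) ∈ Dh := ⟨x1, hx1S, cseq 1, hy1', rfl⟩
      have hagree : ∀ i < m, pair x1 (cseq 1) i = pair x0 (cseq 1) i := by
        intro i hi
        refine pair_apply_congr i ?_ rfl
        refine pair_apply_congr (i/2) (delta_ne ?_) rfl
        rcases hε with h' | h' <;> omega
      have heq : h (pair x1 (cseq 1)) 0 = h (pair x0 (cseq 1)) 0 := hm _ hq1 hagree
      have hcq1 : h (pair x1 (cseq 1)) ∈ prodP LLPO LLPO x1 := (hcorr x1 hx1S).2 _ hy1'
      obtain ⟨u1, v1, hw1, hu1, hv1⟩ := pp_elim hcq1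
      have hu1' : u1 = cseq (1 - ε) := llpo_delta_forced hε hN hu1
      rw [hw, hw1, pair_zero, pair_zero, huε, hu1'] at heq
      rcases hε with h' | h' <;> simp [cseq_apply, h'] at heq
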